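/- arXiv:1311.4262 — 2 statements merged into one kernel-verified Lean document; each statement's English description precedes it below -/
import Mathlib

section
/- Let s be a nonzero complex number, y a complex number, x = s + s^{-1}, A = [[s,1],[0,s^{-1}]], B = [[s,0],[2-y,s^{-1}]], and for a positive integer m set W = (B·A^{-1})^m·(B·A)·(B^{-1}·A)^m, λ = tr(W), and α = 1 + (y+2-x^2)·S_{m-1}(y)·(S_m(y) - S_{m-1}(y)). Then for every integer n, W^n·A - B·W^n equals the 2×2 matrix [[0, φ],[(y-2)·φ, 0]], where φ = S_{n-1}(λ)·α - S_{n-2}(λ). -/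
open Real

/-- Auxiliary sequence for the Chebyshev-like polynomials on natural indices. -/
def Saux {R : Type*} [CommRing R] : ℕ → R → R
  | 0, _ => 1
  | 1, z => z
  | (n + 2), z => z * Saux (n + 1) z - Saux n z

/-- The Chebyshev-like polynomials `S j` indexed by all integers `j`:
`S 0 z = 1`, `S 1 z = z`, and `S (j + 1) z = z * S j z - S (j - 1) z` for all `j : ℤ`
(so `S (-1) z = 0`, `S (-2) z = -1`, and in general `S (-j) z = -S (j - 2) z`). -/
def S {R : Type*} [CommRing R] (j : ℤ) (z : R) : R :=
  if 0 ≤ j then Saux j.toNat z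
  else if j = -1 then 0
  else -Saux (-j - 2).toNat z

section Slemmas

variable {R : Type*} [CommRing R]

lemma S_natCast (k : ℕ) (z : R) : S (k : ℤ) z = Saux k z := by
  simp [S]

lemma S_neg (k : ℕ) (z : R) : S (-(k : ℤ) - 2) z = -Saux k z := by
  have h1 : ¬ (0 ≤ -(k : ℤ) - 2) := by omega
  have h2 : ¬ (-(k : ℤ) - 2 = -1) := by omega
  have h3 : (-(-(k : ℤ) - 2) - 2).toNat = k := by omega
  simp [S, h1, h2, h3]

lemma S_neg_one (z : R) : S (-1) z = 0 := by simp [S]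

lemma S_rec (j : ℤ) (z : R) : S (j + 1) z = z * S j z - S (j - 1) z := by
  rcases le_or_gt 1 j with hj | hj
  · obtain ⟨k, rfl⟩ : ∃ k : ℕ, j = (k : ℤ) + 1 := ⟨(j - 1).toNat, by omega⟩
    have e1 : (k : ℤ) + 1 + 1 = ((k + 2 : ℕ) : ℤ) := by push_cast; ring
    have e2 : (k : ℤ) + 1 = ((k + 1 : ℕ) : ℤ) := by push_cast; ring
    have e3 : (k : ℤ) + 1 - 1 = ((k : ℕ) : ℤ) := by push_cast; ring
    rw [e1, e3, e2, S_natCast, S_natCast, S_natCast]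
    rfl
  rcases le_or_gt (-2) j with hj2 | hj2
  · interval_cases j
    · -- j = -2
      have e1 : (-2 : ℤ) + 1 = -1 := by norm_num
      have e2 : (-2 : ℤ) = -(0 : ℕ) - 2 := by norm_num
      have e3 : (-2 : ℤ) - 1 = -(1 : ℕ) - 2 := by norm_num
      rw [e1, S_neg_one, e3, e2, S_neg, S_neg]
      show (0 : R) = z * -Saux 0 z - -Saux 1 z
      simp [Saux]
    · -- j = -1
      have e1 : (-1 : ℤ) + 1 = ((0 : ℕ) : ℤ) := by norm_num
      have e3 : (-1 : ℤ) - 1 = -(0 : ℕ) - 2 := by norm_num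
      rw [e1, e3, S_natCast, S_neg_one, S_neg]
      show (1 : R) = z * 0 - -Saux 0 z
      simp [Saux]
    · -- j = 0
      have e1 : (0 : ℤ) + 1 = ((1 : ℕ) : ℤ) := by norm_num
      have e2 : (0 : ℤ) = ((0 : ℕ) : ℤ) := by norm_num
      have e3 : (0 : ℤ) - 1 = -1 := by norm_num
      rw [e1, e3, S_neg_one, e2, S_natCast, S_natCast]
      show z = z * 1 - 0
      ring
  · obtain ⟨k, rfl⟩ : ∃ k : ℕ, j = -(k : ℤ) - 3 := ⟨(-j - 3).toNat, by omega⟩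
    have e1 : -(k : ℤ) - 3 + 1 = -(k : ℕ) - 2 := by ring
    have e2 : -(k : ℤ) - 3 = -((k + 1 : ℕ) : ℤ) - 2 := by push_cast; ring
    have e3 : -(k : ℤ) - 3 - 1 = -((k + 2 : ℕ) : ℤ) - 2 := by push_cast; ring
    rw [e1, e3, e2, S_neg, S_neg, S_neg]
    have : Saux (k + 2) z = z * Saux (k + 1) z - Saux k z := rfl
    rw [this]; ring

lemma S_rel (j : ℤ) (z : R) :
    (S j z) ^ 2 - z * S j z * S (j - 1) z + (S (j - 1) z) ^ 2 = 1 := by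
  induction j using Int.induction_on with
  | zero =>
    have e2 : (0 : ℤ) = ((0 : ℕ) : ℤ) := by norm_num
    have e3 : (0 : ℤ) - 1 = -1 := by norm_num
    rw [e3, S_neg_one, e2, S_natCast]
    show (1 : R) ^ 2 - z * 1 * 0 + 0 ^ 2 = 1
    ring
  | succ j ih =>
    have h := S_rec j z
    have e : (j : ℤ) + 1 - 1 = j := by ring
    rw [e]
    linear_combination ih + (S ((j : ℤ) + 1) z - S ((j : ℤ) - 1) z) * h
  | pred j ih =>
    have h := S_rec (-(j : ℤ) - 1) z
    have e1 : -(j : ℤ) - 1 + 1 = -(j : ℤ) := by ring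
    have e2 : -(j : ℤ) - 1 - 1 = -(j : ℤ) - 2 := by ring
    rw [e1, e2] at h
    have e3 : -(j : ℤ) - 1 - 1 = -(j : ℤ) - 2 := by ring
    rw [e3]
    have e4 : -(j : ℤ) - 1 = -(j : ℤ) - 1 := rfl
    linear_combination ih + (S (-(j : ℤ) - 2) z - S (-(j : ℤ)) z) * h

end Slemmas

lemma ch2 (M : Matrix (Fin 2) (Fin 2) ℂ) :
    M * M = Matrix.trace M • M - Matrix.det M • (1 : Matrix (Fin 2) (Fin 2) ℂ) := by
  ext i j
  fin_cases i <;> fin_cases j <;>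
    simp [Matrix.mul_apply, Fin.sum_univ_two, Matrix.trace_fin_two,
      Matrix.det_fin_two, Matrix.one_apply] <;> ring

lemma pow_formula (M : Matrix (Fin 2) (Fin 2) ℂ) (h : M.det = 1) (n : ℤ) :
    M ^ n = S (n - 1) (Matrix.trace M) • M
      - S (n - 2) (Matrix.trace M) • (1 : Matrix (Fin 2) (Fin 2) ℂ) := by
  have hu : IsUnit M.det := by rw [h]; exact isUnit_one
  have hch : M * M = Matrix.trace M • M - (1 : Matrix (Fin 2) (Fin 2) ℂ) := by
    rw [ch2 M, h, one_smul]
  have hinv : M⁻¹ = Matrix.trace M • (1 : Matrix (Fin 2) (Fin 2) ℂ) - M := by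
    apply Matrix.inv_eq_right_inv
    rw [mul_sub, mul_smul_comm, mul_one, hch, sub_sub_cancel]
  induction n using Int.induction_on with
  | zero =>
    have e1 : (0 : ℤ) - 1 = -1 := by norm_num
    have e2 : (0 : ℤ) - 2 = -(0 : ℕ) - 2 := by norm_num
    rw [zpow_zero, e1, e2, S_neg_one, S_neg]
    show (1 : Matrix (Fin 2) (Fin 2) ℂ) = (0 : ℂ) • M - (-(1 : ℂ)) • 1
    module
  | succ j ih =>
    rw [Matrix.zpow_add_one hu, ih, sub_mul, Matrix.smul_mul, Matrix.smul_mul,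
      one_mul, hch]
    have e1 : (j : ℤ) + 1 - 1 = ((j : ℤ) - 1) + 1 := by ring
    have e2 : (j : ℤ) + 1 - 2 = (j : ℤ) - 1 := by ring
    rw [e1, e2, S_rec ((j : ℤ) - 1) (Matrix.trace M)]
    have e4 : (j : ℤ) - 1 - 1 = (j : ℤ) - 2 := by ring
    rw [e4]
    match_scalars <;> ring
  | pred j ih =>
    have e0 : -(j : ℤ) - 1 = (-(j : ℤ)) - 1 := by ring
    rw [e0, Matrix.zpow_sub_one hu, ih, hinv, sub_mul, Matrix.smul_mul, Matrix.smul_mul,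
      one_mul, mul_sub, mul_smul_comm, mul_one, hch]
    have e1 : -(j : ℤ) - 1 - 1 = -(j : ℤ) - 2 := by ring
    have e2 : -(j : ℤ) - 1 - 2 = -(j : ℤ) - 3 := by ring
    rw [e1, e2]
    have hrec := S_rec (-(j : ℤ) - 2) (Matrix.trace M)
    have f1 : -(j : ℤ) - 2 + 1 = -(j : ℤ) - 1 := by ring
    have f2 : -(j : ℤ) - 2 - 1 = -(j : ℤ) - 3 := by ring
    rw [f1, f2] at hrec
    match_scalars <;>
      first
        | ring1
        | linear_combination hrec
        | linear_combination -hrec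

theorem stmt4 (s y x : ℂ) (hs : s ≠ 0) (hx : x = s + s⁻¹) (m : ℕ) (hm : 0 < m)
    (A B W : Matrix (Fin 2) (Fin 2) ℂ)
    (hA : A = !![s, 1; 0, s⁻¹]) (hB : B = !![s, 0; 2 - y, s⁻¹])
    (hW : W = (B * A⁻¹) ^ m * (B * A) * (B⁻¹ * A) ^ m)
    (lam alp : ℂ) (hlam : lam = Matrix.trace W)
    (halp : alp = 1 + (y + 2 - x ^ 2) * S ((m : ℤ) - 1) y * (S (m : ℤ) y - S ((m : ℤ) - 1) y))
    (n : ℤ) :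
    W ^ n * A - B * W ^ n =
      !![0, S (n - 1) lam * alp - S (n - 2) lam;
         (y - 2) * (S (n - 1) lam * alp - S (n - 2) lam), 0] := by
  have hst : s * s⁻¹ = 1 := mul_inv_cancel₀ hs
  -- explicit inverses
  have hAinv : A⁻¹ = !![s⁻¹, -1; 0, s] := by
    apply Matrix.inv_eq_right_inv
    rw [hA]
    ext i j
    fin_cases i <;> fin_cases j <;>
      simp [Matrix.mul_apply, Fin.sum_univ_two, Matrix.one_apply] <;>
      first
        | ring1
        | linear_combination hst
        | linear_combination -hst
        | linear_combination (2 - y) * hst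
        | linear_combination (y - 2) * hst
  have hBinv : B⁻¹ = !![s⁻¹, 0; y - 2, s] := by
    apply Matrix.inv_eq_right_inv
    rw [hB]
    ext i j
    fin_cases i <;> fin_cases j <;>
      simp [Matrix.mul_apply, Fin.sum_univ_two, Matrix.one_apply] <;>
      first
        | ring1
        | linear_combination hst
        | linear_combination -hst
        | linear_combination (2 - y) * hst
        | linear_combination (y - 2) * hst
  -- explicit U = B * A⁻¹ and V = B⁻¹ * A
  have hU : B * A⁻¹ = !![1, -s; (2 - y) * s⁻¹, y - 1] := by
    rw [hB, hAinv]
    ext i j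
    fin_cases i <;> fin_cases j <;>
      simp [Matrix.mul_apply, Fin.sum_univ_two] <;>
      first
        | ring1
        | linear_combination hst
        | linear_combination -hst
        | linear_combination (2 - y) * hst
        | linear_combination (y - 2) * hst
  have hV : B⁻¹ * A = !![1, s⁻¹; (y - 2) * s, y - 1] := by
    rw [hBinv, hA]
    ext i j
    fin_cases i <;> fin_cases j <;>
      simp [Matrix.mul_apply, Fin.sum_univ_two] <;>
      first
        | ring1
        | linear_combination hst
        | linear_combination -hst
        | linear_combination (2 - y) * hst
        | linear_combination (y - 2) * hst
  -- determinants
  have hdetU : (B * A⁻¹).det = 1 := by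
    rw [hU, Matrix.det_fin_two_of]; linear_combination (2 - y) * hst
  have hdetV : (B⁻¹ * A).det = 1 := by
    rw [hV, Matrix.det_fin_two_of]; linear_combination -(y - 2) * hst
  have hdetA : A.det = 1 := by
    rw [hA, Matrix.det_fin_two_of]; linear_combination hst
  have hdetB : B.det = 1 := by
    rw [hB, Matrix.det_fin_two_of]; linear_combination hst
  have hdetW : W.det = 1 := by
    rw [hW, Matrix.det_mul, Matrix.det_mul, Matrix.det_pow, Matrix.det_pow,
      hdetU, hdetV, Matrix.det_mul, hdetA, hdetB]
    simp
  -- traces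
  have htrU : Matrix.trace (B * A⁻¹) = y := by
    rw [hU, Matrix.trace_fin_two_of]; ring
  have htrV : Matrix.trace (B⁻¹ * A) = y := by
    rw [hV, Matrix.trace_fin_two_of]; ring
  -- abbreviations
  have hrel : S ((m : ℤ) - 1) y ^ 2 - y * S ((m : ℤ) - 1) y * S ((m : ℤ) - 2) y + S ((m : ℤ) - 2) y ^ 2 = 1 := by
    have h := S_rel ((m : ℤ) - 1) y
    have e : (m : ℤ) - 1 - 1 = (m : ℤ) - 2 := by ring
    rw [e] at h
    exact h
  have hSm : S (m : ℤ) y = y * S ((m : ℤ) - 1) y - S ((m : ℤ) - 2) y := by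
    have h := S_rec ((m : ℤ) - 1) y
    have e1 : (m : ℤ) - 1 + 1 = (m : ℤ) := by ring
    have e2 : (m : ℤ) - 1 - 1 = (m : ℤ) - 2 := by ring
    rw [e1, e2] at h
    exact h
  -- power formulas for the m-th powers
  have hUm : (B * A⁻¹) ^ m = S ((m : ℤ) - 1) y • (B * A⁻¹) - S ((m : ℤ) - 2) y • (1 : Matrix (Fin 2) (Fin 2) ℂ) := by
    have h := pow_formula (B * A⁻¹) hdetU (m : ℤ)
    rw [zpow_natCast (B * A⁻¹) m, htrU] at h
    exact h
  have hVm : (B⁻¹ * A) ^ m = S ((m : ℤ) - 1) y • (B⁻¹ * A) - S ((m : ℤ) - 2) y • (1 : Matrix (Fin 2) (Fin 2) ℂ) := by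
    have h := pow_formula (B⁻¹ * A) hdetV (m : ℤ)
    rw [zpow_natCast (B⁻¹ * A) m, htrV] at h
    exact h
  -- the key commutation relation
  set p : ℂ := S ((m : ℤ) - 1) y with hp
  set q : ℂ := S ((m : ℤ) - 2) y with hq
  clear_value p q
  have halp' : alp = 1 + (y + 2 - (s + s⁻¹) ^ 2) * p * ((y * p - q) - p) := by
    rw [halp, hx, hSm]
  have hfac1 : p • !![(1 : ℂ), -s; (2 - y) * s⁻¹, y - 1] - q • (1 : Matrix (Fin 2) (Fin 2) ℂ)
      = !![p - q, p * -s; p * ((2 - y) * s⁻¹), p * (y - 1) - q] := by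
    ext i j
    fin_cases i <;> fin_cases j <;>
      simp [Matrix.smul_apply, Matrix.sub_apply, Matrix.one_apply, smul_eq_mul]
  have hfac2 : p • !![(1 : ℂ), s⁻¹; (y - 2) * s, y - 1] - q • (1 : Matrix (Fin 2) (Fin 2) ℂ)
      = !![p - q, p * s⁻¹; p * ((y - 2) * s), p * (y - 1) - q] := by
    ext i j
    fin_cases i <;> fin_cases j <;>
      simp [Matrix.smul_apply, Matrix.sub_apply, Matrix.one_apply, smul_eq_mul]
  have key : W * A - B * W = alp • !![(0 : ℂ), 1; y - 2, 0] := by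
    rw [hW, hUm, hVm, hU, hV, hA, hB, halp', hfac1, hfac2]
    simp only [Matrix.mul_fin_two]
    ext i j
    fin_cases i <;> fin_cases j <;>
      simp [Matrix.smul_apply, Matrix.sub_apply, smul_eq_mul] <;>
      first
        | ring1
        | linear_combination ((1)*1) * hrel + ((1)*q^2 + (-2)*p*q + (-2)*p*q*y + (-1)*p^2 +
            (1)*p^2*y + (1)*p^2*y^2 + (1)*(s⁻¹)^2*p*q + (1)*(s⁻¹)^2*p^2 + (-1)*(s⁻¹)^2*p^2*y +
            (-2)*s*s⁻¹*p*q + (1)*s*s⁻¹*p^2*y + (1)*s^2*p*q + (1)*s^2*p^2 + (-1)*s^2*p^2*y) * hst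
        | linear_combination ((-2)*1 + (1)*y) * hrel + ((-2)*q^2 + (1)*q^2*y + (4)*p*q +
            (2)*p*q*y + (-2)*p*q*y^2 + (2)*p^2 + (-3)*p^2*y + (-1)*p^2*y^2 + (1)*p^2*y^3 +
            (-2)*(s⁻¹)^2*p*q + (1)*(s⁻¹)^2*p*q*y + (-2)*(s⁻¹)^2*p^2 + (3)*(s⁻¹)^2*p^2*y + (-1)*(s⁻¹)^2*p^2*y^2 +
            (4)*s*s⁻¹*p*q + (-2)*s*s⁻¹*p*q*y + (-2)*s*s⁻¹*p^2*y + (1)*s*s⁻¹*p^2*y^2 + (-2)*s^2*p*q +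
            (1)*s^2*p*q*y + (-2)*s^2*p^2 + (3)*s^2*p^2*y + (-1)*s^2*p^2*y^2) * hst
  have hWA : W * A = B * W + alp • !![(0 : ℂ), 1; y - 2, 0] := by
    rw [← key]; abel
  -- the n-th power of W
  have hWn : W ^ n = S (n - 1) lam • W - S (n - 2) lam • (1 : Matrix (Fin 2) (Fin 2) ℂ) := by
    rw [hlam]
    exact pow_formula W hdetW n
  have hAB : A - B = !![(0 : ℂ), 1; y - 2, 0] := by
    rw [hA, hB]
    ext i j
    fin_cases i <;> fin_cases j <;> simp [Matrix.sub_apply] <;> ring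
  have hA' : A = B + !![(0 : ℂ), 1; y - 2, 0] := by rw [← hAB]; abel
  have hRHS : (!![0, S (n - 1) lam * alp - S (n - 2) lam;
         (y - 2) * (S (n - 1) lam * alp - S (n - 2) lam), 0] : Matrix (Fin 2) (Fin 2) ℂ)
      = (S (n - 1) lam * alp - S (n - 2) lam) • !![(0 : ℂ), 1; y - 2, 0] := by
    ext i j
    fin_cases i <;> fin_cases j <;> simp [Matrix.smul_apply, smul_eq_mul] <;> ring
  rw [hWn, sub_mul, Matrix.smul_mul, Matrix.smul_mul, one_mul, mul_sub,
    Matrix.mul_smul, Matrix.mul_smul, mul_one, hWA, hRHS, hA']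
  module
end

section
/- Let m be a positive integer, let n be an integer with n ∉ {0, 1, 2}, set q = 2n^2 + 2|n|·√(4m(m+1)+n^2), and let x be a real number satisfying both |x| ≥ 2·cos(π/(4m+2)) and 2·√(1 - 1/q) < |x| ≤ 2. Then there exists a real number y with y > 2 such that φ(x,y) = 0, where φ(x,y) = S_{n-1}(λ)·α - S_{n-2}(λ) with λ = x^2 - y - (y-2)(y+2-x^2)·S_m(y)·S_{m-1}(y) and α = 1 + (y+2-x^2)·S_{m-1}(y)·(S_m(y) - S_{m-1}(y)). -/
set_option maxHeartbeats 1000000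
open Real

lemma saux_zero {R : Type*} [CommRing R] (z : R) : Saux 0 z = 1 := rfl
lemma saux_one {R : Type*} [CommRing R] (z : R) : Saux 1 z = z := rfl
lemma saux_add_two {R : Type*} [CommRing R] (k : ℕ) (z : R) :
    Saux (k + 2) z = z * Saux (k + 1) z - Saux k z := rfl

lemma saux_cont : ∀ k : ℕ, Continuous (fun z : ℝ => Saux k z)
  | 0 => continuous_const
  | 1 => continuous_id
  | (k + 2) => by
      have h1 := saux_cont (k + 1)
      have h0 := saux_cont k
      show Continuous (fun z : ℝ => z * Saux (k + 1) z - Saux k z)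
      exact (continuous_id.mul h1).sub h0

lemma saux_ge {y : ℝ} (hy : 2 ≤ y) : ∀ k : ℕ, 1 ≤ Saux k y ∧ Saux k y ≤ Saux (k + 1) y
  | 0 => by constructor <;> simp [saux_zero, saux_one] <;> linarith
  | (k + 1) => by
      obtain ⟨h1, h2⟩ := saux_ge hy k
      refine ⟨by linarith, ?_⟩
      rw [saux_add_two]
      nlinarith

lemma saux_two : ∀ k : ℕ, Saux k (2 : ℝ) = k + 1
  | 0 => by simp [saux_zero]
  | 1 => by norm_num [saux_one]
  | (k + 2) => by
      have h1 := saux_two (k + 1)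
      have h0 := saux_two k
      rw [saux_add_two, h1, h0]
      push_cast; ring

lemma saux_cos {θ : ℝ} :
    ∀ k : ℕ, Saux k (2 * Real.cos θ) * Real.sin θ = Real.sin (((k : ℝ) + 1) * θ)
  | 0 => by simp [saux_zero]
  | 1 => by
      rw [saux_one]
      rw [show (((1 : ℕ) : ℝ) + 1) * θ = 2 * θ by push_cast; ring, Real.sin_two_mul]
      ring
  | (k + 2) => by
      have h1 := saux_cos (θ := θ) (k + 1)
      have h0 := saux_cos (θ := θ) k
      have e1 : (((k + 2 : ℕ) : ℝ) + 1) * θ = ((((k + 1 : ℕ) : ℝ) + 1) * θ) + θ := by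
        push_cast; ring
      have e0 : (((k : ℕ) : ℝ) + 1) * θ = ((((k + 1 : ℕ) : ℝ) + 1) * θ) - θ := by
        push_cast; ring
      rw [saux_add_two, e1, Real.sin_add]
      rw [e0, Real.sin_sub] at h0
      linear_combination 2 * Real.cos θ * h1 - h0

lemma saux_val₁ (p : ℕ) (hp : 3 ≤ p) :
    Saux (p - 1) (2 * Real.cos (π / p)) = 0 ∧ Saux (p - 2) (2 * Real.cos (π / p)) = 1 := by
  have hp0 : (0 : ℝ) < p := by positivity
  have hp0' : (p : ℝ) ≠ 0 := ne_of_gt hp0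
  set u : ℝ := π / p with hu
  have hu1 : 0 < u := by positivity
  have hu2 : u < π := by
    rw [hu]
    apply div_lt_self Real.pi_pos
    exact_mod_cast by omega
  have hs : 0 < Real.sin u := Real.sin_pos_of_pos_of_lt_pi hu1 hu2
  have hcast : ((p - 1 : ℕ) : ℝ) = (p : ℝ) - 1 := by
    have : 1 ≤ p := by omega
    push_cast [this]; ring
  have hcast2 : ((p - 2 : ℕ) : ℝ) = (p : ℝ) - 2 := by
    have : 2 ≤ p := by omega
    push_cast [this]; ring
  constructor
  · have h1 := saux_cos (θ := u) (p - 1)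
    rw [hcast] at h1
    have e : ((p : ℝ) - 1 + 1) * u = π := by rw [hu]; field_simp; ring
    rw [e, Real.sin_pi] at h1
    rcases mul_eq_zero.1 h1 with h | h
    · exact h
    · exact absurd h (ne_of_gt hs)
  · have h1 := saux_cos (θ := u) (p - 2)
    rw [hcast2] at h1
    have e : ((p : ℝ) - 2 + 1) * u = π - u := by rw [hu]; field_simp; ring
    rw [e, Real.sin_pi_sub] at h1
    field_simp at h1
    exact h1

lemma saux_val₂ (p : ℕ) (hp : 3 ≤ p) :
    Saux (p - 1) (2 * Real.cos (2 * π / p)) = 0 ∧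
      Saux (p - 2) (2 * Real.cos (2 * π / p)) = -1 := by
  have hp0 : (0 : ℝ) < p := by positivity
  have hp0' : (p : ℝ) ≠ 0 := ne_of_gt hp0
  set u : ℝ := 2 * π / p with hu
  have hu1 : 0 < u := by positivity
  have hu2 : u < π := by
    rw [hu, div_lt_iff₀ hp0]
    nlinarith [Real.pi_pos, show (3 : ℝ) ≤ p from by exact_mod_cast hp]
  have hs : 0 < Real.sin u := Real.sin_pos_of_pos_of_lt_pi hu1 hu2
  have hcast : ((p - 1 : ℕ) : ℝ) = (p : ℝ) - 1 := by
    have : 1 ≤ p := by omega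
    push_cast [this]; ring
  have hcast2 : ((p - 2 : ℕ) : ℝ) = (p : ℝ) - 2 := by
    have : 2 ≤ p := by omega
    push_cast [this]; ring
  constructor
  · have h1 := saux_cos (θ := u) (p - 1)
    rw [hcast] at h1
    have e : ((p : ℝ) - 1 + 1) * u = 2 * π := by rw [hu]; field_simp; ring
    rw [e, Real.sin_two_pi] at h1
    rcases mul_eq_zero.1 h1 with h | h
    · exact h
    · exact absurd h (ne_of_gt hs)
  · have h1 := saux_cos (θ := u) (p - 2)
    rw [hcast2] at h1
    have e : ((p : ℝ) - 2 + 1) * u = 2 * π - u := by rw [hu]; field_simp; ring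
    rw [e, Real.sin_sub, Real.sin_two_pi, Real.cos_two_pi] at h1
    have h2 : Saux (p - 2) (2 * Real.cos u) * Real.sin u = (-1) * Real.sin u := by
      linarith [h1]
    exact mul_right_cancel₀ (ne_of_gt hs) h2

lemma S_nonneg_eq {R : Type*} [CommRing R] {j : ℤ} (hj : 0 ≤ j) (z : R) :
    S j z = Saux j.toNat z := if_pos hj

lemma S_neg_eq {R : Type*} [CommRing R] {j : ℤ} (hj : j ≤ -2) (z : R) :
    S j z = -Saux (-j - 2).toNat z := by
  rw [S, if_neg (by omega), if_neg (by omega)]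

lemma S_cont (j : ℤ) : Continuous (fun z : ℝ => S j z) := by
  unfold S
  split_ifs
  · exact saux_cont _
  · exact continuous_const
  · exact (saux_cont _).neg

lemma root_between {F : ℝ → ℝ} (hF : Continuous F) {a b : ℝ} (ha : 2 < a) (hb : 2 < b)
    (h1 : F a ≤ 0) (h2 : 0 ≤ F b) : ∃ y, 2 < y ∧ F y = 0 := by
  obtain ⟨y, hy, hFy⟩ := intermediate_value_uIcc (f := F) (a := a) (b := b) hF.continuousOn
    (Set.mem_uIcc.2 (Or.inl ⟨h1, h2⟩))
  refine ⟨y, ?_, hFy⟩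
  rcases Set.mem_uIcc.1 hy with ⟨h, _⟩ | ⟨h, _⟩
  · exact ha.trans_le h
  · exact hb.trans_le h

lemma root_from_two {F : ℝ → ℝ} (hF : Continuous F) {b : ℝ} (hb : 2 ≤ b)
    (h2 : 0 < F 2) (hbneg : F b ≤ 0) : ∃ y, 2 < y ∧ F y = 0 := by
  obtain ⟨y, hy, hFy⟩ := intermediate_value_Icc' (f := F) hb hF.continuousOn
    (Set.mem_Icc.2 ⟨hbneg, h2.le⟩)
  refine ⟨y, lt_of_le_of_ne hy.1 ?_, hFy⟩
  intro h
  rw [← h] at hFy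
  linarith

lemma cos_bound (p : ℕ) (hp : 3 ≤ p) : Real.cos (π / p) ≤ 1 - 2 / (p : ℝ) ^ 2 := by
  have h3 : (3 : ℝ) ≤ p := by exact_mod_cast hp
  have hp0 : (0 : ℝ) < p := by linarith
  have habs : |π / p| ≤ π := by
    rw [abs_of_pos (by positivity)]
    exact div_le_self Real.pi_pos.le (by linarith)
  have h := Real.cos_le_one_sub_mul_cos_sq habs
  have e : 2 / π ^ 2 * (π / p) ^ 2 = 2 / (p : ℝ) ^ 2 := by
    field_simp
  rw [e] at h
  exact h

theorem stmt18 (m : ℕ) (hm : 0 < m) (n : ℤ) (hn0 : n ≠ 0) (hn1 : n ≠ 1) (hn2 : n ≠ 2)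
    (q : ℝ)
    (hq : q = 2 * (n : ℝ) ^ 2 +
      2 * |(n : ℝ)| * Real.sqrt (4 * (m : ℝ) * ((m : ℝ) + 1) + (n : ℝ) ^ 2))
    (x : ℝ)
    (hx1 : 2 * Real.cos (Real.pi / (4 * (m : ℝ) + 2)) ≤ |x|)
    (hx2 : 2 * Real.sqrt (1 - 1 / q) < |x|) (hx3 : |x| ≤ 2) :
    ∃ y : ℝ, 2 < y ∧
      S (n - 1) (x ^ 2 - y - (y - 2) * (y + 2 - x ^ 2) * S (m : ℤ) y * S ((m : ℤ) - 1) y) *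
      (1 + (y + 2 - x ^ 2) * S ((m : ℤ) - 1) y * (S (m : ℤ) y - S ((m : ℤ) - 1) y)) -
      S (n - 2) (x ^ 2 - y - (y - 2) * (y + 2 - x ^ 2) * S (m : ℤ) y * S ((m : ℤ) - 1) y) = 0 := by
  -- replace S (m:ℤ) by Saux m
  have hSm : ∀ z : ℝ, S (m : ℤ) z = Saux m z := by
    intro z
    rw [S_nonneg_eq (by positivity) z, Int.toNat_natCast]
  have hSm1 : ∀ z : ℝ, S ((m : ℤ) - 1) z = Saux (m - 1) z := by
    intro z
    rw [S_nonneg_eq (by omega) z]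
    congr 1
    omega
  set lam : ℝ → ℝ := fun y =>
    x ^ 2 - y - (y - 2) * (y + 2 - x ^ 2) * Saux m y * Saux (m - 1) y with hlam
  set alph : ℝ → ℝ := fun y =>
    1 + (y + 2 - x ^ 2) * Saux (m - 1) y * (Saux m y - Saux (m - 1) y) with halph
  set F : ℝ → ℝ := fun y => S (n - 1) (lam y) * alph y - S (n - 2) (lam y) with hF
  suffices h : ∃ y, 2 < y ∧ F y = 0 by
    obtain ⟨y, hy, hFy⟩ := h
    refine ⟨y, hy, ?_⟩
    rw [hSm y, hSm1 y]
    exact hFy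
  -- basic facts
  have hx3' : x ^ 2 ≤ 4 := by nlinarith [abs_nonneg x, sq_abs x]
  have hcl : Continuous lam := by
    rw [hlam]
    exact (continuous_const.sub continuous_id).sub
      ((((continuous_id.sub continuous_const).mul
        ((continuous_id.add continuous_const).sub continuous_const)).mul
        (saux_cont m)).mul (saux_cont (m - 1)))
  have hca : Continuous alph := by
    rw [halph]
    exact continuous_const.add
      ((((continuous_id.add continuous_const).sub continuous_const).mul
        (saux_cont (m - 1))).mul ((saux_cont m).sub (saux_cont (m - 1))))
  have hcF : Continuous F := by
    rw [hF]
    exact (((S_cont (n - 1)).comp hcl).mul hca).sub ((S_cont (n - 2)).comp hcl)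
  have hlam2 : lam 2 = x ^ 2 - 2 := by rw [hlam]; ring
  have hlam7 : lam 7 ≤ x ^ 2 - 7 := by
    have h1 := (saux_ge (by norm_num : (2:ℝ) ≤ 7) m).1
    have h2 := (saux_ge (by norm_num : (2:ℝ) ≤ 7) (m - 1)).1
    have he : lam 7 = x ^ 2 - 7 - (7 - 2) * (7 + 2 - x ^ 2) * Saux m 7 * Saux (m - 1) 7 := by
      rw [hlam]
    rw [he]
    have hp : 0 ≤ (7 - 2 : ℝ) * (7 + 2 - x ^ 2) * Saux m 7 * Saux (m - 1) 7 := by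
      apply mul_nonneg (mul_nonneg (mul_nonneg (by norm_num) (by nlinarith)) (by linarith))
      linarith
    linarith
  -- q facts
  have hnabs : |(n : ℝ)| = (n.natAbs : ℝ) := by
    rw [← Int.cast_abs, Int.abs_eq_natAbs, Int.cast_natCast]
  have hn1' : (1 : ℝ) ≤ |(n : ℝ)| := by
    rw [hnabs]
    exact_mod_cast by omega
  have hsqrt_ge : |(n : ℝ)| ≤ Real.sqrt (4 * (m : ℝ) * ((m : ℝ) + 1) + (n : ℝ) ^ 2) := by
    rw [show |(n : ℝ)| = Real.sqrt ((n : ℝ) ^ 2) from (Real.sqrt_sq_eq_abs _).symm]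
    apply Real.sqrt_le_sqrt
    have : (0 : ℝ) ≤ (m : ℝ) := by positivity
    nlinarith
  have hq4 : 4 * |(n : ℝ)| ^ 2 ≤ q := by
    rw [hq]
    have h1 : 2 * |(n : ℝ)| * |(n : ℝ)| ≤
        2 * |(n : ℝ)| * Real.sqrt (4 * (m : ℝ) * ((m : ℝ) + 1) + (n : ℝ) ^ 2) :=
      mul_le_mul_of_nonneg_left hsqrt_ge (by positivity)
    nlinarith [sq_abs (n : ℝ)]
  have hqpos : 0 < q := by nlinarith
  have h1q : 0 ≤ 1 - 1 / q := by
    have : 1 / q ≤ 1 := by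
      rw [div_le_one hqpos]; nlinarith
    linarith
  have hxsq : 4 * (1 - 1 / q) < x ^ 2 := by
    have h := mul_self_lt_mul_self (by positivity) hx2
    rw [abs_mul_abs_self] at h
    have hs : Real.sqrt (1 - 1/q) * Real.sqrt (1 - 1/q) = 1 - 1/q :=
      Real.mul_self_sqrt h1q
    rw [pow_two]
    nlinarith
  have hits : ∀ c : ℝ, -2 ≤ c → c < x ^ 2 - 2 → ∃ y, 2 < y ∧ lam y = c := by
    intro c hc1 hc2
    have h7 : lam 7 ≤ c := by linarith
    have h2' : c ≤ lam 2 := by rw [hlam2]; linarith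
    obtain ⟨y, hy, hlamy⟩ := intermediate_value_Icc' (by norm_num : (2:ℝ) ≤ 7)
      hcl.continuousOn (Set.mem_Icc.2 ⟨h7, h2'⟩)
    refine ⟨y, lt_of_le_of_ne hy.1 ?_, hlamy⟩
    intro h
    rw [← h, hlam2] at hlamy
    linarith
  have hmR : (1 : ℝ) ≤ (m : ℝ) := by exact_mod_cast hm
  have hsaux2m : Saux m (2 : ℝ) = (m : ℝ) + 1 := saux_two m
  have hsaux2m1 : Saux (m - 1) (2 : ℝ) = (m : ℝ) := by
    rw [saux_two (m - 1)]
    have h1 : 1 ≤ m := hm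
    push_cast [Nat.cast_sub h1]
    ring
  have halph2 : alph 2 = 1 + (4 - x ^ 2) * (m : ℝ) := by
    simp only [halph]
    rw [hsaux2m, hsaux2m1]
    ring
  have halphge : ∀ y : ℝ, 2 ≤ y → 1 ≤ alph y := by
    intro y hy
    obtain ⟨ha1, _⟩ := saux_ge hy (m - 1)
    have hmono : Saux (m - 1) y ≤ Saux m y := by
      have h := (saux_ge hy (m - 1)).2
      have hmm : m - 1 + 1 = m := by omega
      rwa [hmm] at h
    have h0 : 0 ≤ y + 2 - x ^ 2 := by linarith
    simp only [halph]
    have hpr := mul_nonneg (mul_nonneg h0 (by linarith : (0:ℝ) ≤ Saux (m - 1) y))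
      (by linarith : (0:ℝ) ≤ Saux m y - Saux (m - 1) y)
    linarith
  rcases show n ≤ -3 ∨ n = -2 ∨ n = -1 ∨ 3 ≤ n by omega with hcn | hcn | hcn | hcn
  -- CASE n ≤ -3 and CASE n ≥ 3 share the two interior points
  · -- |n| ≥ 3, neg
    set p : ℕ := n.natAbs with hpdef
    have hp : 3 ≤ p := by omega
    have h3R : (3 : ℝ) ≤ (p : ℝ) := by exact_mod_cast hp
    have hq4' : 4 * (p : ℝ) ^ 2 ≤ q := by
      rw [hnabs] at hq4
      exact_mod_cast hq4
    have hppos : (0 : ℝ) < (p : ℝ) ^ 2 := by positivity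
    have hdiv : 4 / q ≤ 1 / (p : ℝ) ^ 2 := by
      rw [div_le_div_iff₀ (by linarith) hppos]
      nlinarith
    have hxbig : 4 - 1 / (p : ℝ) ^ 2 < x ^ 2 := by
      have h2 : 4 - 4 / q < x ^ 2 := by
        have e : 4 * (1 - 1 / q) = 4 - 4 / q := by ring
        linarith
      linarith
    have hcb : 2 * Real.cos (π / (p : ℝ)) < x ^ 2 - 2 := by
      have h := cos_bound p hp
      have h4 : (0 : ℝ) < 1 / (p : ℝ) ^ 2 := by positivity
      have e : 2 / (p : ℝ) ^ 2 = 2 * (1 / (p : ℝ) ^ 2) := by ring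
      linarith
    have hpip : π * 3 ≤ π * (p : ℝ) := mul_le_mul_of_nonneg_left h3R Real.pi_pos.le
    have hc2le : 2 * Real.cos (2 * π / (p : ℝ)) ≤ 2 * Real.cos (π / (p : ℝ)) := by
      have h := Real.cos_le_cos_of_nonneg_of_le_pi
        (x := π / (p : ℝ)) (y := 2 * π / (p : ℝ))
        (by positivity)
        (by
          rw [div_le_iff₀ (by linarith : (0:ℝ) < (p : ℝ))]
          linarith [Real.pi_pos])
        (by
          rw [div_le_div_iff₀ (by linarith : (0:ℝ) < (p : ℝ)) (by linarith : (0:ℝ) < (p : ℝ))]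
          linarith [Real.pi_pos])
      linarith
    obtain ⟨y₁, hy₁, hl₁⟩ := hits (2 * Real.cos (π / (p : ℝ)))
      (by linarith [Real.neg_one_le_cos (π / (p : ℝ))]) hcb
    obtain ⟨y₂, hy₂, hl₂⟩ := hits (2 * Real.cos (2 * π / (p : ℝ)))
      (by linarith [Real.neg_one_le_cos (2 * π / (p : ℝ))]) (by linarith)
    obtain ⟨v1, v2⟩ := saux_val₁ p hp
    obtain ⟨w1, w2⟩ := saux_val₂ p hp
    have hS1 : ∀ z : ℝ, S (n - 1) z = -Saux (p - 1) z := by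
      intro z
      rw [S_neg_eq (by omega)]
      congr 2
      omega
    have hS2 : ∀ z : ℝ, S (n - 2) z = -Saux p z := by
      intro z
      rw [S_neg_eq (by omega)]
      congr 2
      omega
    have hsp1 : Saux p (2 * Real.cos (π / p)) = -1 := by
      have h := saux_add_two (p - 2) (2 * Real.cos (π / (p : ℝ)))
      have e1 : p - 2 + 2 = p := by omega
      have e2 : p - 2 + 1 = p - 1 := by omega
      rw [e1, e2, v1, v2] at h
      rw [h]; ring
    have hsp2 : Saux p (2 * Real.cos (2 * π / p)) = 1 := by
      have h := saux_add_two (p - 2) (2 * Real.cos (2 * π / (p : ℝ)))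
      have e1 : p - 2 + 2 = p := by omega
      have e2 : p - 2 + 1 = p - 1 := by omega
      rw [e1, e2, w1, w2] at h
      rw [h]; ring
    have e₁ : F y₁ = -1 := by
      simp only [hF]
      rw [hS1, hS2, hl₁, v1, hsp1]
      ring
    have e₂ : F y₂ = 1 := by
      simp only [hF]
      rw [hS1, hS2, hl₂, w1, hsp2]
      ring
    exact root_between hcF hy₁ hy₂ (by rw [e₁]; norm_num) (by rw [e₂]; norm_num)
  · -- n = -2
    subst hcn
    have hSa : ∀ z : ℝ, S (-2 - 1) z = -z := by
      intro z
      rw [S_neg_eq (by norm_num)]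
      norm_num [saux_one]
    have hSb : ∀ z : ℝ, S (-2 - 2) z = -(z * z - 1) := by
      intro z
      have h2 : Saux 2 z = z * z - 1 := by
        rw [show (2 : ℕ) = 0 + 2 from rfl, saux_add_two, saux_one, saux_zero]
      rw [S_neg_eq (by norm_num), show (-(-2 - 2 : ℤ) - 2).toNat = 2 by rfl, h2]
    have hq16 : (16 : ℝ) ≤ q := by
      have : |((-2 : ℤ) : ℝ)| = 2 := by norm_num
      rw [this] at hq4
      linarith
    have hxgt : 2 < x ^ 2 := by
      have h1 : 1 / q ≤ 1 / 16 := by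
        apply one_div_le_one_div_of_le <;> linarith
      nlinarith
    have hqgt : 12 + 8 * (m : ℝ) < q := by
      rw [hq]
      have e : ((-2 : ℤ) : ℝ) ^ 2 = 4 := by norm_num
      have e2 : |((-2 : ℤ) : ℝ)| = 2 := by norm_num
      rw [e, e2]
      have hs : 2 * (m : ℝ) + 1 < Real.sqrt (4 * (m : ℝ) * ((m : ℝ) + 1) + 4) := by
        rw [show (4 : ℝ) * (m : ℝ) * ((m : ℝ) + 1) + 4 = ((2 * (m:ℝ) + 1)) ^ 2 + 3 by ring]
        have := Real.lt_sqrt (x := 2 * (m : ℝ) + 1) (y := (2 * (m:ℝ) + 1) ^ 2 + 3)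
          (by positivity)
        rw [this]
        linarith
      linarith
    have hkey : (4 - x ^ 2) * (12 + 8 * (m : ℝ)) < 4 := by
      have h1 : (4 - x ^ 2) * q < 4 := by
        have e : 4 * (1 - 1 / q) = 4 - 4 / q := by ring
        have h2 : 4 - x ^ 2 < 4 / q := by linarith
        exact (lt_div_iff₀ hqpos).1 h2
      nlinarith
    obtain ⟨y₁, hy₁, hl₁⟩ := hits 0 (by norm_num) (by linarith)
    have hF2 : 0 < F 2 := by
      simp only [hF]
      rw [hSa, hSb, hlam2, halph2]
      nlinarith [mul_nonneg (mul_self_nonneg (4 - x ^ 2)) (by positivity : (0:ℝ) ≤ (m:ℝ))]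
    have hFy₁ : F y₁ ≤ 0 := by
      simp only [hF]
      rw [hSa, hSb, hl₁]
      norm_num
    exact root_from_two hcF hy₁.le hF2 hFy₁
  · -- n = -1
    subst hcn
    have hSa : ∀ z : ℝ, S (-1 - 1) z = -1 := by
      intro z
      rw [S_neg_eq (by norm_num)]
      norm_num [saux_zero]
    have hSb : ∀ z : ℝ, S (-1 - 2) z = -z := by
      intro z
      rw [S_neg_eq (by norm_num)]
      norm_num [saux_one]
    have hqeq : q = 4 * (m : ℝ) + 4 := by
      rw [hq]
      have e : 4 * (m : ℝ) * ((m : ℝ) + 1) + ((-1 : ℤ) : ℝ) ^ 2 = (2 * (m : ℝ) + 1) ^ 2 := by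
        push_cast; ring
      rw [e, Real.sqrt_sq (by positivity)]
      push_cast
      norm_num
      ring
    have hkey : (4 - x ^ 2) * ((m : ℝ) + 1) < 1 := by
      have h1 : (4 - x ^ 2) * q < 4 := by
        have e : 4 * (1 - 1 / q) = 4 - 4 / q := by ring
        have h2 : 4 - x ^ 2 < 4 / q := by linarith
        exact (lt_div_iff₀ hqpos).1 h2
      rw [hqeq] at h1
      nlinarith
    have hF2 : 0 < F 2 := by
      simp only [hF]
      rw [hSa, hSb, hlam2, halph2]
      nlinarith
    have hF7 : F 7 ≤ 0 := by
      simp only [hF]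
      rw [hSa, hSb]
      have := halphge 7 (by norm_num)
      have := hlam7
      nlinarith
    exact root_from_two hcF (by norm_num) hF2 hF7
  · -- |n| ≥ 3, pos
    set p : ℕ := n.natAbs with hpdef
    have hp : 3 ≤ p := by omega
    have h3R : (3 : ℝ) ≤ (p : ℝ) := by exact_mod_cast hp
    have hq4' : 4 * (p : ℝ) ^ 2 ≤ q := by
      rw [hnabs] at hq4
      exact_mod_cast hq4
    have hppos : (0 : ℝ) < (p : ℝ) ^ 2 := by positivity
    have hdiv : 4 / q ≤ 1 / (p : ℝ) ^ 2 := by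
      rw [div_le_div_iff₀ (by linarith) hppos]
      nlinarith
    have hxbig : 4 - 1 / (p : ℝ) ^ 2 < x ^ 2 := by
      have h2 : 4 - 4 / q < x ^ 2 := by
        have e : 4 * (1 - 1 / q) = 4 - 4 / q := by ring
        linarith
      linarith
    have hcb : 2 * Real.cos (π / (p : ℝ)) < x ^ 2 - 2 := by
      have h := cos_bound p hp
      have h4 : (0 : ℝ) < 1 / (p : ℝ) ^ 2 := by positivity
      have e : 2 / (p : ℝ) ^ 2 = 2 * (1 / (p : ℝ) ^ 2) := by ring
      linarith
    have hpip : π * 3 ≤ π * (p : ℝ) := mul_le_mul_of_nonneg_left h3R Real.pi_pos.le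
    have hc2le : 2 * Real.cos (2 * π / (p : ℝ)) ≤ 2 * Real.cos (π / (p : ℝ)) := by
      have h := Real.cos_le_cos_of_nonneg_of_le_pi
        (x := π / (p : ℝ)) (y := 2 * π / (p : ℝ))
        (by positivity)
        (by
          rw [div_le_iff₀ (by linarith : (0:ℝ) < (p : ℝ))]
          linarith [Real.pi_pos])
        (by
          rw [div_le_div_iff₀ (by linarith : (0:ℝ) < (p : ℝ)) (by linarith : (0:ℝ) < (p : ℝ))]
          linarith [Real.pi_pos])
      linarith
    obtain ⟨y₁, hy₁, hl₁⟩ := hits (2 * Real.cos (π / (p : ℝ)))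
      (by linarith [Real.neg_one_le_cos (π / (p : ℝ))]) hcb
    obtain ⟨y₂, hy₂, hl₂⟩ := hits (2 * Real.cos (2 * π / (p : ℝ)))
      (by linarith [Real.neg_one_le_cos (2 * π / (p : ℝ))]) (by linarith)
    obtain ⟨v1, v2⟩ := saux_val₁ p hp
    obtain ⟨w1, w2⟩ := saux_val₂ p hp
    have hS1 : ∀ z : ℝ, S (n - 1) z = Saux (p - 1) z := by
      intro z
      rw [S_nonneg_eq (by omega)]
      congr 1
      omega
    have hS2 : ∀ z : ℝ, S (n - 2) z = Saux (p - 2) z := by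
      intro z
      rw [S_nonneg_eq (by omega)]
      congr 1
      omega
    have e₁ : F y₁ = -1 := by
      simp only [hF]
      rw [hS1, hS2, hl₁, v1, v2]
      ring
    have e₂ : F y₂ = 1 := by
      simp only [hF]
      rw [hS1, hS2, hl₂, w1, w2]
      ring
    exact root_between hcF hy₁ hy₂ (by rw [e₁]; norm_num) (by rw [e₂]; norm_num)
end
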